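/- arXiv:0906.5548 — 3 statements merged into one kernel-verified Lean document; each statement's English description precedes it below -/
import Mathlib

section
/- Define d(g,h) = Σ_{p ∈ P} d_p(g,h) for g,h ∈ GL_d(ℚ), where the sum is over all primes and the archimedean place. Then there exists a constant C > 0 such that for all g ∈ GL_d(ℚ) and all R ≥ 0, the ball B(g,R) = {h ∈ GL_d(ℚ) : d(g,h) ≤ R} has cardinality at most C·e^{CR}. -/
open Matrix
noncomputable def lnplus (x : ℝ) : ℝ := max (Real.log x) 0

noncomputable def opNormP (p : ℕ) [Fact p.Prime] {n : Type*} [Fintype n] [DecidableEq n]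
    (g : Matrix n n ℚ_[p]) : ℝ :=
  ‖LinearMap.toContinuousLinearMap g.mulVecLin‖

noncomputable def dP (p : ℕ) [Fact p.Prime] {d : ℕ}
    (g h : GL (Fin d) ℚ_[p]) : ℝ :=
  lnplus (opNormP p ((g⁻¹ * h : GL (Fin d) ℚ_[p]) : Matrix (Fin d) (Fin d) ℚ_[p]))
  + lnplus (opNormP p ((h⁻¹ * g : GL (Fin d) ℚ_[p]) : Matrix (Fin d) (Fin d) ℚ_[p]))

noncomputable def opNormR {d : ℕ} (g : Matrix (Fin d) (Fin d) ℝ) : ℝ :=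
  ‖LinearMap.toContinuousLinearMap (Matrix.toEuclideanLin g)‖

noncomputable def dR {d : ℕ} (g h : GL (Fin d) ℝ) : ℝ :=
  lnplus (opNormR ((g⁻¹ * h : GL (Fin d) ℝ) : Matrix (Fin d) (Fin d) ℝ))
  + lnplus (opNormR ((h⁻¹ * g : GL (Fin d) ℝ) : Matrix (Fin d) (Fin d) ℝ))

noncomputable def dQ {d : ℕ} (g h : GL (Fin d) ℚ) : ℝ :=
  dR (Matrix.GeneralLinearGroup.map (algebraMap ℚ ℝ) g)
      (Matrix.GeneralLinearGroup.map (algebraMap ℚ ℝ) h)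
  + ∑' p : Nat.Primes,
      (letI : Fact p.1.Prime := ⟨p.2⟩
       dP p.1 (Matrix.GeneralLinearGroup.map (algebraMap ℚ ℚ_[p.1]) g)
              (Matrix.GeneralLinearGroup.map (algebraMap ℚ ℚ_[p.1]) h))

/- ### Auxiliary lemmas -/

lemma lnplus_nonneg (x : ℝ) : 0 ≤ lnplus x := le_max_right _ _

lemma lnplus_eq_zero {x : ℝ} (h0 : 0 ≤ x) (h : x ≤ 1) : lnplus x = 0 :=
  max_eq_right ((Real.log_nonpos_iff h0).mpr h)

lemma log_le_lnplus (x : ℝ) : Real.log x ≤ lnplus x := le_max_left _ _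

lemma lnplus_mono {x y : ℝ} (h0 : 0 ≤ x) (h : x ≤ y) : lnplus x ≤ lnplus y := by
  rcases eq_or_lt_of_le h0 with hx | hx
  · rw [← hx, lnplus, Real.log_zero, max_self]; exact lnplus_nonneg y
  · exact max_le_max (Real.log_le_log hx h) le_rfl

lemma entry_le_opNormP (p : ℕ) [Fact p.Prime] {d : ℕ} (m : Matrix (Fin d) (Fin d) ℚ_[p])
    (i j : Fin d) : ‖m i j‖ ≤ opNormP p m := by
  set w : Fin d → ℚ_[p] := Pi.single j 1 with hw
  have h1 : ‖w‖ ≤ 1 := by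
    refine (pi_norm_le_iff_of_nonneg zero_le_one).mpr fun k => ?_
    by_cases hk : k = j <;> simp [hw, Pi.single_apply, hk]
  calc ‖m i j‖ = ‖(m.mulVec w) i‖ := by simp [hw, Matrix.mulVec_single]
    _ ≤ ‖m.mulVec w‖ := norm_le_pi_norm _ i
    _ = ‖(LinearMap.toContinuousLinearMap m.mulVecLin) w‖ := by
        simp [Matrix.mulVecLin_apply]
    _ ≤ opNormP p m * ‖w‖ := ContinuousLinearMap.le_opNorm _ _
    _ ≤ opNormP p m * 1 := mul_le_mul_of_nonneg_left h1 (norm_nonneg _)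
    _ = opNormP p m := mul_one _

lemma opNormP_le_one (p : ℕ) [Fact p.Prime] {d : ℕ} (m : Matrix (Fin d) (Fin d) ℚ_[p])
    (hm : ∀ i j, ‖m i j‖ ≤ 1) : opNormP p m ≤ 1 := by
  refine ContinuousLinearMap.opNorm_le_bound _ zero_le_one fun v => ?_
  rw [one_mul]
  refine (pi_norm_le_iff_of_nonneg (norm_nonneg v)).mpr fun i => ?_
  show ‖(m.mulVec v) i‖ ≤ ‖v‖
  rw [Matrix.mulVec, dotProduct]
  refine IsUltrametricDist.norm_sum_le_of_forall_le_of_nonneg (norm_nonneg v) fun j _ => ?_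
  calc ‖m i j * v j‖ = ‖m i j‖ * ‖v j‖ := norm_mul _ _
    _ ≤ 1 * ‖v‖ := mul_le_mul (hm i j) (norm_le_pi_norm v j) (norm_nonneg _) zero_le_one
    _ = ‖v‖ := one_mul _

lemma entry_le_opNormR {d : ℕ} (m : Matrix (Fin d) (Fin d) ℝ) (i j : Fin d) :
    |m i j| ≤ opNormR m := by
  set v : EuclideanSpace ℝ (Fin d) := (WithLp.equiv 2 _).symm (Pi.single j 1) with hv
  have hnv : ‖v‖ = 1 := by
    rw [hv, WithLp.equiv_symm_apply, PiLp.norm_toLp_single, norm_one]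
  have happ : Matrix.toEuclideanLin m v
      = (WithLp.equiv 2 (Fin d → ℝ)).symm (m.mulVec (Pi.single j 1)) :=
    rfl
  have hcoord : |m i j| ≤ ‖Matrix.toEuclideanLin m v‖ := by
    rw [happ]
    have heq : (WithLp.equiv 2 (Fin d → ℝ)).symm (m.mulVec (Pi.single j 1)) i = m i j := by
      simp [Matrix.mulVec_single]
    calc |m i j|
        = ‖((WithLp.equiv 2 (Fin d → ℝ)).symm (m.mulVec (Pi.single j 1))
            : EuclideanSpace ℝ (Fin d)) i‖ := by rw [heq, Real.norm_eq_abs]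
      _ ≤ _ := by
          rw [Real.norm_eq_abs, EuclideanSpace.norm_eq, ← Real.sqrt_sq_eq_abs]
          apply Real.sqrt_le_sqrt
          have := Finset.single_le_sum
            (f := fun k => ‖((WithLp.equiv 2 (Fin d → ℝ)).symm (m.mulVec (Pi.single j 1))
              : EuclideanSpace ℝ (Fin d)) k‖ ^ 2)
            (fun k _ => sq_nonneg _) (Finset.mem_univ i)
          simpa [Real.norm_eq_abs, sq_abs] using this
  refine hcoord.trans ?_
  calc ‖Matrix.toEuclideanLin m v‖
      = ‖(LinearMap.toContinuousLinearMap (Matrix.toEuclideanLin m)) v‖ := by simp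
    _ ≤ opNormR m * ‖v‖ := ContinuousLinearMap.le_opNorm _ _
    _ = opNormR m := by rw [hnv, mul_one]

lemma padic_norm_entry_eq (p : ℕ) [hp : Fact p.Prime] (q : ℚ) (hq : q ≠ 0) (hdvd : p ∣ q.den) :
    ‖(q : ℚ_[p])‖ = (p : ℝ) ^ (q.den.factorization p) := by
  have hnum : ¬ (p : ℤ) ∣ q.num := by
    intro hd
    have h1 : p ∣ q.num.natAbs := by
      have := Int.natAbs_dvd_natAbs.mpr hd
      simpa using this
    have : p ∣ 1 := q.reduced.gcd_eq_one ▸ Nat.dvd_gcd h1 hdvd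
    exact hp.1.one_lt.ne' (Nat.dvd_one.mp this)
  have hval : padicValRat p q = -(padicValNat p q.den : ℤ) := by
    rw [padicValRat_def, padicValInt.eq_zero_of_not_dvd hnum]; push_cast; ring
  have h2 : padicNorm p q = (p : ℚ) ^ (q.den.factorization p) := by
    rw [padicNorm.eq_zpow_of_nonzero hq, hval, neg_neg,
      Nat.factorization_def _ hp.1, zpow_natCast]
  rw [Padic.eq_padicNorm, h2]
  push_cast
  ring

lemma lnplus_padic_entry (p : ℕ) [hp : Fact p.Prime] (q : ℚ) (hq : q ≠ 0) (hdvd : p ∣ q.den) :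
    lnplus ‖(q : ℚ_[p])‖ = (q.den.factorization p : ℝ) * Real.log p := by
  rw [padic_norm_entry_eq p q hq hdvd, lnplus,
    max_eq_left (Real.log_nonneg (one_le_pow₀ (by exact_mod_cast hp.1.one_lt.le))),
    Real.log_pow]

lemma log_den_le_tsum (q : ℚ) {f : Nat.Primes → ℝ} (hs : Summable f)
    (hnn : ∀ P, 0 ≤ f P)
    (hf : ∀ P : Nat.Primes, (letI : Fact P.1.Prime := ⟨P.2⟩; lnplus ‖(q : ℚ_[P.1])‖) ≤ f P) :
    Real.log q.den ≤ ∑' P, f P := by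
  rcases eq_or_ne q 0 with rfl | hq
  · simpa using tsum_nonneg hnn
  have hden : q.den ≠ 0 := q.den_ne_zero
  set F := q.den.primeFactors with hF
  have hlog : Real.log q.den = ∑ p ∈ F, (q.den.factorization p : ℝ) * Real.log p := by
    conv_lhs => rw [← Nat.factorization_prod_pow_eq_self hden]
    rw [Finsupp.prod, Nat.support_factorization, ← hF]
    push_cast
    rw [Real.log_prod]
    · exact Finset.sum_congr rfl fun p hp => by rw [Real.log_pow]
    · intro p hp
      have hpp := Nat.prime_of_mem_primeFactors hp
      exact (pow_pos (by exact_mod_cast hpp.pos) _).ne'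
  set G : Finset Nat.Primes :=
    F.attach.image (fun x => ⟨x.1, Nat.prime_of_mem_primeFactors x.2⟩) with hG
  have hsumeq : ∑ p ∈ F, (q.den.factorization p : ℝ) * Real.log p
      = ∑ P ∈ G, (letI : Fact P.1.Prime := ⟨P.2⟩; lnplus ‖(q : ℚ_[P.1])‖) := by
    erw [hG, Finset.sum_image (by
      intro x hx y hy hxy
      exact Subtype.ext (by injection hxy))]
    rw [← Finset.sum_attach F (fun p => (q.den.factorization p : ℝ) * Real.log p)]
    refine Finset.sum_congr rfl fun x _ => ?_
    have : Fact x.1.Prime := ⟨Nat.prime_of_mem_primeFactors x.2⟩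
    rw [lnplus_padic_entry x.1 q hq (Nat.dvd_of_mem_primeFactors x.2)]
  rw [hlog, hsumeq]
  refine le_trans (Finset.sum_le_sum fun P _ => hf P) ?_
  exact Summable.sum_le_tsum G (fun P _ => hnn P) hs

lemma rat_bounds (q : ℚ) (R : ℝ) {f : Nat.Primes → ℝ} (hs : Summable f) (hnn : ∀ P, 0 ≤ f P)
    (hfp : ∀ P : Nat.Primes, (letI : Fact P.1.Prime := ⟨P.2⟩; lnplus ‖(q : ℚ_[P.1])‖) ≤ f P)
    (hsum : lnplus ‖(q : ℝ)‖ + ∑' P, f P ≤ R) :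
    (q.den : ℝ) ≤ Real.exp R ∧ |(q.num : ℝ)| ≤ Real.exp R := by
  have htsum : Real.log q.den ≤ ∑' P, f P := log_den_le_tsum q hs hnn hfp
  constructor
  · have h1 : Real.log q.den ≤ R := le_trans htsum (by linarith [lnplus_nonneg ‖(q : ℝ)‖])
    calc (q.den : ℝ) = Real.exp (Real.log q.den) := by
          rw [Real.exp_log (by exact_mod_cast q.den_pos)]
      _ ≤ Real.exp R := Real.exp_le_exp.mpr h1
  · rcases eq_or_ne q 0 with rfl | hq
    · simpa using (Real.exp_pos R).le
    have hnum : (q.num : ℝ) ≠ 0 := by exact_mod_cast Rat.num_ne_zero.mpr hq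
    have habs : |(q.num : ℝ)| = |(q : ℝ)| * q.den := by
      have hd : |(q.den : ℝ)| = q.den := abs_of_pos (by exact_mod_cast q.den_pos)
      rw [Rat.cast_def, abs_div, hd, div_mul_cancel₀ _ (by exact_mod_cast q.den_ne_zero)]
    have hlog : Real.log |(q.num : ℝ)| ≤ R := by
      rw [habs, Real.log_mul (by simpa [abs_ne_zero] using (by exact_mod_cast hq : (q:ℝ) ≠ 0))
        (by exact_mod_cast q.den_ne_zero)]
      have h2 : Real.log |(q : ℝ)| ≤ lnplus ‖(q : ℝ)‖ := by
        rw [← Real.norm_eq_abs]; exact log_le_lnplus _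
      linarith
    calc |(q.num : ℝ)| = Real.exp (Real.log |(q.num : ℝ)|) := by
          rw [Real.exp_log (abs_pos.mpr hnum)]
      _ ≤ Real.exp R := Real.exp_le_exp.mpr hlog

lemma GL_map_coe {d : ℕ} {S : Type*} [CommRing S] (f : ℚ →+* S) (u : GL (Fin d) ℚ) :
    ((Matrix.GeneralLinearGroup.map f u : GL (Fin d) S) : Matrix (Fin d) (Fin d) S)
      = (u : Matrix (Fin d) (Fin d) ℚ).map f := rfl

lemma GL_map_inv_mul {d : ℕ} {S : Type*} [CommRing S] (f : ℚ →+* S) (g h : GL (Fin d) ℚ) :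
    (Matrix.GeneralLinearGroup.map f g)⁻¹ * Matrix.GeneralLinearGroup.map f h
      = Matrix.GeneralLinearGroup.map f (g⁻¹ * h) := by
  rw [_root_.map_mul, _root_.map_inv]

lemma dP_map_eq (p : ℕ) [Fact p.Prime] {d : ℕ} (g h : GL (Fin d) ℚ) :
    dP p (Matrix.GeneralLinearGroup.map (algebraMap ℚ ℚ_[p]) g)
        (Matrix.GeneralLinearGroup.map (algebraMap ℚ ℚ_[p]) h)
      = lnplus (opNormP p
          (((g⁻¹ * h : GL (Fin d) ℚ) : Matrix (Fin d) (Fin d) ℚ).map (algebraMap ℚ ℚ_[p])))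
      + lnplus (opNormP p
          (((h⁻¹ * g : GL (Fin d) ℚ) : Matrix (Fin d) (Fin d) ℚ).map (algebraMap ℚ ℚ_[p]))) := by
  rw [dP, GL_map_inv_mul, GL_map_inv_mul, GL_map_coe, GL_map_coe]

lemma dR_map_eq {d : ℕ} (g h : GL (Fin d) ℚ) :
    dR (Matrix.GeneralLinearGroup.map (algebraMap ℚ ℝ) g)
        (Matrix.GeneralLinearGroup.map (algebraMap ℚ ℝ) h)
      = lnplus (opNormR
          (((g⁻¹ * h : GL (Fin d) ℚ) : Matrix (Fin d) (Fin d) ℚ).map (algebraMap ℚ ℝ)))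
      + lnplus (opNormR
          (((h⁻¹ * g : GL (Fin d) ℚ) : Matrix (Fin d) (Fin d) ℚ).map (algebraMap ℚ ℝ))) := by
  rw [dR, GL_map_inv_mul, GL_map_inv_mul, GL_map_coe, GL_map_coe]

lemma map_entry_eq {d : ℕ} {S : Type*} [DivisionRing S] [CharZero S] (f : ℚ →+* S)
    (m : Matrix (Fin d) (Fin d) ℚ) (i j : Fin d) :
    (m.map f) i j = ((m i j : ℚ) : S) := by
  simp [Matrix.map_apply, eq_ratCast f]

lemma opNormP_nonneg (p : ℕ) [Fact p.Prime] {d : ℕ} (m : Matrix (Fin d) (Fin d) ℚ_[p]) :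
    0 ≤ opNormP p m := norm_nonneg _

lemma dP_nonneg (p : ℕ) [Fact p.Prime] {d : ℕ} (g h : GL (Fin d) ℚ_[p]) : 0 ≤ dP p g h :=
  add_nonneg (lnplus_nonneg _) (lnplus_nonneg _)

lemma summable_dP {d : ℕ} (g h : GL (Fin d) ℚ) :
    Summable (fun P : Nat.Primes =>
      (letI : Fact P.1.Prime := ⟨P.2⟩
       dP P.1 (Matrix.GeneralLinearGroup.map (algebraMap ℚ ℚ_[P.1]) g)
              (Matrix.GeneralLinearGroup.map (algebraMap ℚ ℚ_[P.1]) h))) := by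
  classical
  set A := ((g⁻¹ * h : GL (Fin d) ℚ) : Matrix (Fin d) (Fin d) ℚ) with hA
  set B := ((h⁻¹ * g : GL (Fin d) ℚ) : Matrix (Fin d) (Fin d) ℚ) with hB
  set D := (∏ i, ∏ j, (A i j).den) * (∏ i, ∏ j, (B i j).den) with hD
  have hD0 : D ≠ 0 := by
    simp [hD, Finset.prod_eq_zero_iff]
  set F : Finset Nat.Primes := D.primeFactors.preimage (fun P : Nat.Primes => P.1)
    (fun x _ y _ hxy => Subtype.ext hxy) with hFdef
  apply summable_of_ne_finset_zero (s := F)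
  intro P hP
  letI : Fact P.1.Prime := ⟨P.2⟩
  have hPD : ¬ P.1 ∣ D := fun hdvd =>
    hP (Finset.mem_preimage.mpr (Nat.mem_primeFactors.mpr ⟨P.2, hdvd, hD0⟩))
  have hent : ∀ (M : Matrix (Fin d) (Fin d) ℚ), (∀ i j, (M i j).den ∣ D) →
      opNormP P.1 (M.map (algebraMap ℚ ℚ_[P.1])) ≤ 1 := by
    intro M hM
    apply opNormP_le_one
    intro i j
    rw [map_entry_eq]
    exact Padic.norm_rat_le_one (fun hc => hPD (hc.trans (hM i j)))
  have hAD : ∀ i j, (A i j).den ∣ D := fun i j =>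
    Dvd.dvd.mul_right
      ((Finset.dvd_prod_of_mem (fun j' => (A i j').den) (Finset.mem_univ j)).trans
        (Finset.dvd_prod_of_mem (fun i' => ∏ j', (A i' j').den) (Finset.mem_univ i))) _
  have hBD : ∀ i j, (B i j).den ∣ D := fun i j =>
    Dvd.dvd.mul_left
      ((Finset.dvd_prod_of_mem (fun j' => (B i j').den) (Finset.mem_univ j)).trans
        (Finset.dvd_prod_of_mem (fun i' => ∏ j', (B i' j').den) (Finset.mem_univ i))) _
  show dP P.1 _ _ = 0
  rw [dP_map_eq, ← hA, ← hB]
  have z1 : lnplus (opNormP P.1 (A.map (algebraMap ℚ ℚ_[P.1]))) = 0 :=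
    lnplus_eq_zero (opNormP_nonneg _ _) (hent A hAD)
  have z2 : lnplus (opNormP P.1 (B.map (algebraMap ℚ ℚ_[P.1]))) = 0 :=
    lnplus_eq_zero (opNormP_nonneg _ _) (hent B hBD)
  rw [z1, z2, add_zero]

/-- There is a constant `C > 0` such that every ball `B(g,R) = {h : d(g,h) ≤ R}` in
`GL_d(ℚ)` for the pseudometric `d = Σ_p d_p` is finite of cardinality at most `C·e^{CR}`. -/
theorem card_ball_dQ_le (d : ℕ) :
    ∃ C : ℝ, 0 < C ∧ ∀ (g : GL (Fin d) ℚ) (R : ℝ), 0 ≤ R →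
      {h : GL (Fin d) ℚ | dQ g h ≤ R}.Finite ∧
      (Nat.card {h : GL (Fin d) ℚ | dQ g h ≤ R} : ℝ) ≤ C * Real.exp (C * R) := by
  classical
  refine ⟨3 ^ (d * d) + 2 * (d * d) + 1, by positivity, fun g R hR => ?_⟩
  set C : ℝ := 3 ^ (d * d) + 2 * (d * d) + 1 with hC
  set E : ℝ := Real.exp R with hE
  have hE1 : 1 ≤ E := Real.one_le_exp hR
  set N : ℕ := ⌊E⌋₊ with hN
  have hNle : (N : ℝ) ≤ E := Nat.floor_le (by linarith)
  set S : Finset ℚ :=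
    ((Finset.Icc (-(N : ℤ)) (N : ℤ)) ×ˢ Finset.Icc 1 N).image
      (fun x => (x.1 : ℚ) / (x.2 : ℚ)) with hS
  set T : Finset (Fin d → Fin d → ℚ) :=
    Fintype.piFinset (fun _ => Fintype.piFinset fun _ => S) with hT
  set ψ : GL (Fin d) ℚ → (Fin d → Fin d → ℚ) :=
    fun h' => fun i j => ((g⁻¹ * h' : GL (Fin d) ℚ) : Matrix (Fin d) (Fin d) ℚ) i j with hψdef
  have hψ : Function.Injective ψ := by
    intro h1 h2 he
    have hmat : ((g⁻¹ * h1 : GL (Fin d) ℚ) : Matrix (Fin d) (Fin d) ℚ)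
        = ((g⁻¹ * h2 : GL (Fin d) ℚ) : Matrix (Fin d) (Fin d) ℚ) :=
      Matrix.ext fun i j => congrFun (congrFun he i) j
    have h3 : (g⁻¹ * h1 : GL (Fin d) ℚ) = g⁻¹ * h2 := Units.ext hmat
    exact mul_left_cancel h3
  -- key entry bound
  have hkey : ∀ h' : GL (Fin d) ℚ, dQ g h' ≤ R → ψ h' ∈ T := by
    intro h' hball
    set A := ((g⁻¹ * h' : GL (Fin d) ℚ) : Matrix (Fin d) (Fin d) ℚ) with hA
    set fP : Nat.Primes → ℝ := fun P =>
      (letI : Fact P.1.Prime := ⟨P.2⟩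
       dP P.1 (Matrix.GeneralLinearGroup.map (algebraMap ℚ ℚ_[P.1]) g)
              (Matrix.GeneralLinearGroup.map (algebraMap ℚ ℚ_[P.1]) h')) with hfPdef
    have hs : Summable fP := summable_dP g h'
    have hnn : ∀ P, 0 ≤ fP P := by
      intro P
      letI : Fact P.1.Prime := ⟨P.2⟩
      exact dP_nonneg _ _ _
    have hdq : dQ g h' = dR (Matrix.GeneralLinearGroup.map (algebraMap ℚ ℝ) g)
        (Matrix.GeneralLinearGroup.map (algebraMap ℚ ℝ) h') + ∑' P, fP P := rfl
    refine Fintype.mem_piFinset.mpr fun i => Fintype.mem_piFinset.mpr fun j => ?_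
    set q : ℚ := A i j with hq
    have hfp : ∀ P : Nat.Primes,
        (letI : Fact P.1.Prime := ⟨P.2⟩; lnplus ‖(q : ℚ_[P.1])‖) ≤ fP P := by
      intro P
      letI : Fact P.1.Prime := ⟨P.2⟩
      have e1 : ((q : ℚ) : ℚ_[P.1]) = (A.map (algebraMap ℚ ℚ_[P.1])) i j :=
        (map_entry_eq _ A i j).symm
      calc lnplus ‖(q : ℚ_[P.1])‖
          ≤ lnplus (opNormP P.1 (A.map (algebraMap ℚ ℚ_[P.1]))) := by
            rw [e1]; exact lnplus_mono (norm_nonneg _) (entry_le_opNormP _ _ i j)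
        _ ≤ fP P := by
            rw [hfPdef]
            simp only []
            rw [dP_map_eq, ← hA]
            have := lnplus_nonneg (opNormP P.1
              (((h'⁻¹ * g : GL (Fin d) ℚ) : Matrix (Fin d) (Fin d) ℚ).map (algebraMap ℚ ℚ_[P.1])))
            linarith
    have hfR : lnplus ‖(q : ℝ)‖ ≤ dR (Matrix.GeneralLinearGroup.map (algebraMap ℚ ℝ) g)
        (Matrix.GeneralLinearGroup.map (algebraMap ℚ ℝ) h') := by
      have e1 : ((q : ℚ) : ℝ) = (A.map (algebraMap ℚ ℝ)) i j := (map_entry_eq _ A i j).symm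
      rw [dR_map_eq, ← hA]
      have h2 : lnplus ‖(q : ℝ)‖ ≤ lnplus (opNormR (A.map (algebraMap ℚ ℝ))) := by
        rw [Real.norm_eq_abs, e1]
        exact lnplus_mono (abs_nonneg _) (entry_le_opNormR _ i j)
      have := lnplus_nonneg (opNormR
        (((h'⁻¹ * g : GL (Fin d) ℚ) : Matrix (Fin d) (Fin d) ℚ).map (algebraMap ℚ ℝ)))
      linarith
    have hsum : lnplus ‖(q : ℝ)‖ + ∑' P, fP P ≤ R := by
      rw [hdq] at hball
      linarith
    obtain ⟨hden, hnum⟩ := rat_bounds q R hs hnn hfp hsum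
    -- q ∈ S
    have hdenN : q.den ∈ Finset.Icc 1 N :=
      Finset.mem_Icc.mpr ⟨q.pos, Nat.le_floor hden⟩
    have hnumN : q.num ∈ Finset.Icc (-(N : ℤ)) (N : ℤ) := by
      have habs : |q.num| ≤ (N : ℤ) := by
        rw [hN, Int.natCast_floor_eq_floor (by linarith : (0:ℝ) ≤ E)]
        refine Int.le_floor.mpr ?_
        rw [Int.cast_abs]
        exact hnum
      exact Finset.mem_Icc.mpr (abs_le.mp habs)
    refine Finset.mem_image.mpr ⟨(q.num, q.den), Finset.mem_product.mpr ⟨hnumN, hdenN⟩, ?_⟩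
    exact Rat.num_div_den q
  have hsub : {h' : GL (Fin d) ℚ | dQ g h' ≤ R} ⊆ ψ ⁻¹' ↑T := fun h' hh' => hkey h' hh'
  have hfinpre : (ψ ⁻¹' (↑T : Set (Fin d → Fin d → ℚ))).Finite :=
    Set.Finite.preimage hψ.injOn T.finite_toSet
  refine ⟨hfinpre.subset hsub, ?_⟩
  -- cardinality
  have hcard : Nat.card {h' : GL (Fin d) ℚ | dQ g h' ≤ R} ≤ T.card := by
    rw [Nat.card_coe_set_eq]
    calc {h' : GL (Fin d) ℚ | dQ g h' ≤ R}.ncard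
        ≤ (ψ ⁻¹' ↑T).ncard := Set.ncard_le_ncard hsub hfinpre
      _ = (ψ '' (ψ ⁻¹' ↑T)).ncard := (Set.ncard_image_of_injective _ hψ).symm
      _ ≤ (↑T : Set (Fin d → Fin d → ℚ)).ncard :=
          Set.ncard_le_ncard (Set.image_preimage_subset _ _) T.finite_toSet
      _ = T.card := Set.ncard_coe_finset T
  have hScard : S.card ≤ (2 * N + 1) * N := by
    refine le_trans Finset.card_image_le ?_
    rw [Finset.card_product, Int.card_Icc, Nat.card_Icc]
    have h1 : ((N : ℤ) + 1 - -(N : ℤ)).toNat = 2 * N + 1 := by omega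
    have h2 : N + 1 - 1 = N := by omega
    rw [h1, h2]
  have hTcard : T.card = (S.card ^ d) ^ d := by
    simp [hT, Fintype.card_piFinset]
  have hSR : (S.card : ℝ) ≤ 3 * E * E := by
    calc (S.card : ℝ) ≤ ((2 * N + 1) * N : ℕ) := by exact_mod_cast hScard
      _ ≤ 3 * E * E := by push_cast; nlinarith
  have h3EE : (0:ℝ) ≤ 3 * E * E := by nlinarith
  calc (Nat.card {h' : GL (Fin d) ℚ | dQ g h' ≤ R} : ℝ)
      ≤ (T.card : ℝ) := by exact_mod_cast hcard
    _ = ((S.card : ℝ) ^ d) ^ d := by rw [hTcard]; push_cast; ring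
    _ ≤ ((3 * E * E) ^ d) ^ d :=
        pow_le_pow_left₀ (pow_nonneg (Nat.cast_nonneg _) d)
          (pow_le_pow_left₀ (Nat.cast_nonneg _) hSR d) d
    _ = (3 * E * E) ^ (d * d) := by rw [← pow_mul]
    _ = 3 ^ (d * d) * (E * E) ^ (d * d) := by rw [mul_assoc, mul_pow]
    _ = 3 ^ (d * d) * Real.exp ((2 * ((d : ℝ) * d)) * R) := by
        rw [hE, ← Real.exp_add, ← Real.exp_nat_mul]
        congr 1
        rw [Real.exp_eq_exp]
        push_cast
        ring
    _ ≤ C * Real.exp (C * R) := by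
        have hC3 : (3:ℝ) ^ (d * d) ≤ C := by
          rw [hC]; have : (0:ℝ) ≤ 2 * (d * d) := by positivity
          linarith
        have hC2 : (2 * ((d : ℝ) * d)) ≤ C := by
          rw [hC]; have h30 : (0:ℝ) < 3 ^ (d * d) := by positivity
          nlinarith
        have hexp : Real.exp ((2 * ((d : ℝ) * d)) * R) ≤ Real.exp (C * R) :=
          Real.exp_le_exp.mpr (mul_le_mul_of_nonneg_right hC2 hR)
        exact mul_le_mul hC3 hexp (Real.exp_pos _).le (by positivity)
end

section
/- Let λ_1 ≥ ... ≥ λ_d be real numbers and for a prime p let Λ_n be the diagonal matrix with entries (Λ_n)_{ii} = p^{-⌊nλ_i/ln p⌋}. Let P_p be the group of matrices (u_{ij}) ∈ GL_d(ℚ_p) with u_{ij} = 0 whenever λ_i < λ_j. Then for u ∈ GL_d(ℚ_p): u ∈ P_p if and only if lim_{n→∞} (1/n) ln‖Λ_n⁻¹ u Λ_n‖_p = 0, and this holds if and only if limsup_{n→∞} (1/n) ln‖Λ_n⁻¹ u Λ_n‖_p ≤ 0. -/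
open Matrix
/-- The invertible diagonal matrix with entries `p^(f i)`. -/
noncomputable def diagGL (p : ℕ) [hp : Fact p.Prime] {d : ℕ} (f : Fin d → ℤ) :
    GL (Fin d) ℚ_[p] :=
  ⟨Matrix.diagonal fun i => (p : ℚ_[p]) ^ f i,
   Matrix.diagonal fun i => (p : ℚ_[p]) ^ (-f i),
   by
     rw [Matrix.diagonal_mul_diagonal]
     have hne : (p : ℚ_[p]) ≠ 0 := Nat.cast_ne_zero.mpr hp.out.ne_zero
     simp [mul_inv_cancel₀ (zpow_ne_zero _ hne)],
   by
     rw [Matrix.diagonal_mul_diagonal]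
     have hne : (p : ℚ_[p]) ≠ 0 := Nat.cast_ne_zero.mpr hp.out.ne_zero
     simp [inv_mul_cancel₀ (zpow_ne_zero _ hne)]⟩

/-- `Λ_n`: the diagonal matrix with entries `p^{-⌊nλ_i/ln p⌋}`. -/
noncomputable def LamP (p : ℕ) [Fact p.Prime] {d : ℕ} (lam : Fin d → ℝ) (n : ℕ) :
    GL (Fin d) ℚ_[p] :=
  diagGL p fun i => -⌊(n * lam i) / Real.log p⌋

/-! ### Auxiliary lemmas -/

open Finset Filter

theorem opNormP_eq (p : ℕ) [Fact p.Prime] {d : ℕ} [Nonempty (Fin d)]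
    (g : Matrix (Fin d) (Fin d) ℚ_[p]) :
    opNormP p g = (Finset.univ : Finset (Fin d × Fin d)).sup'
      Finset.univ_nonempty (fun ij => ‖g ij.1 ij.2‖) := by
  set C := (Finset.univ : Finset (Fin d × Fin d)).sup' Finset.univ_nonempty
    (fun ij => ‖g ij.1 ij.2‖) with hC
  obtain ⟨ij0⟩ : Nonempty (Fin d × Fin d) := inferInstance
  have hC0 : 0 ≤ C := (norm_nonneg (g ij0.1 ij0.2)).trans
    (Finset.le_sup' (fun ij => ‖g ij.1 ij.2‖) (Finset.mem_univ ij0))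
  unfold opNormP
  refine le_antisymm ?_ ?_
  · apply ContinuousLinearMap.opNorm_le_bound _ hC0
    intro v
    simp only [LinearMap.coe_toContinuousLinearMap']
    rw [show g.mulVecLin v = g.mulVec v from rfl]
    rw [pi_norm_le_iff_of_nonneg (by positivity)]
    intro i
    have hrow : g.mulVec v i = ∑ j, g i j * v j := by
      simp [Matrix.mulVec, dotProduct]
    rw [hrow]
    refine ((Finset.univ_nonempty).norm_sum_le_sup'_norm (fun j => g i j * v j)).trans ?_
    apply Finset.sup'_le
    intro j _
    rw [norm_mul]
    have h1 : ‖g i j‖ ≤ C := Finset.le_sup' (fun ij => ‖g ij.1 ij.2‖) (Finset.mem_univ (i,j))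
    exact mul_le_mul h1 (norm_le_pi_norm v j) (norm_nonneg _) hC0
  · apply Finset.sup'_le
    rintro ⟨i, j⟩ -
    have h1 : g.mulVecLin (Pi.single j 1) = fun i => g i j := by
      simp [Matrix.mulVecLin_apply, Matrix.mulVec_single]; rfl
    have h2 : ‖g i j‖ ≤ ‖LinearMap.toContinuousLinearMap g.mulVecLin (Pi.single j 1)‖ := by
      simp only [LinearMap.coe_toContinuousLinearMap', h1]
      exact norm_le_pi_norm (fun i => g i j) i
    refine h2.trans ?_
    have h3 := (LinearMap.toContinuousLinearMap g.mulVecLin).le_opNorm (Pi.single j 1)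
    rwa [Pi.norm_single, norm_one, mul_one] at h3

theorem tendsto_finset_sup'_aux {ι : Type*} (S : Finset ι) (hS : S.Nonempty) (F : ι → ℕ → ℝ)
    (L : ι → ℝ) (h : ∀ i ∈ S, Tendsto (F i) atTop (nhds (L i))) :
    Tendsto (fun n => S.sup' hS (fun i => F i n)) atTop (nhds (S.sup' hS L)) := by
  induction hS using Finset.Nonempty.cons_induction with
  | singleton j => simpa using h j (by simp)
  | cons j t hj ht IH =>
    simp only [Finset.sup'_cons ht]
    exact (h j (Finset.mem_cons_self j t)).max (IH fun i hi => h i (Finset.mem_cons_of_mem hi))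

theorem log_max' {a b : ℝ} (ha : 0 < a) (hb : 0 < b) :
    Real.log (max a b) = max (Real.log a) (Real.log b) := by
  rcases le_total a b with h | h
  · rw [max_eq_right h, max_eq_right (Real.log_le_log ha h)]
  · rw [max_eq_left h, max_eq_left (Real.log_le_log hb h)]

theorem log_sup'_aux {ι : Type*} (S : Finset ι) (hS : S.Nonempty) (v : ι → ℝ)
    (hv : ∀ i ∈ S, 0 < v i) :
    Real.log (S.sup' hS v) = S.sup' hS (fun i => Real.log (v i)) := by
  induction hS using Finset.Nonempty.cons_induction with
  | singleton j => simp
  | cons j t hj ht IH =>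
    rw [Finset.sup'_cons ht, Finset.sup'_cons ht]
    have htpos : 0 < t.sup' ht v :=
      lt_of_lt_of_le (hv _ (Finset.mem_cons_of_mem ht.choose_spec))
        (Finset.le_sup' v ht.choose_spec)
    rw [log_max' (hv j (Finset.mem_cons_self j t)) htpos,
      IH fun i hi => hv i (Finset.mem_cons_of_mem hi)]

theorem mul_sup'_aux {ι : Type*} (S : Finset ι) (hS : S.Nonempty) (v : ι → ℝ) (c : ℝ)
    (hc : 0 ≤ c) : c * S.sup' hS v = S.sup' hS (fun i => c * v i) :=
  Finset.comp_sup'_eq_sup'_comp hS (fun x => c * x) (fun x y => mul_max_of_nonneg x y hc)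

theorem tendsto_floor_mul_div_aux (x : ℝ) :
    Tendsto (fun n : ℕ => (⌊(n : ℝ) * x⌋ : ℝ) / n) atTop (nhds x) := by
  have h1 : Tendsto (fun n : ℕ => x - 1 / (n : ℝ)) atTop (nhds x) := by
    simpa using (tendsto_const_nhds (x := x)).sub tendsto_one_div_atTop_nhds_zero_nat
  apply tendsto_of_tendsto_of_tendsto_of_le_of_le' h1 tendsto_const_nhds
  · filter_upwards [eventually_gt_atTop 0] with n hn
    have hn' : (0:ℝ) < n := by positivity
    rw [le_div_iff₀ hn', sub_mul, one_div, inv_mul_cancel₀ hn'.ne']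
    nlinarith [Int.sub_one_lt_floor ((n:ℝ) * x)]
  · filter_upwards [eventually_gt_atTop 0] with n hn
    have hn' : (0:ℝ) < n := by positivity
    rw [div_le_iff₀ hn']
    nlinarith [Int.floor_le ((n:ℝ) * x)]

theorem diagGL_conj_apply (p : ℕ) [Fact p.Prime] {d : ℕ} (f : Fin d → ℤ)
    (u : GL (Fin d) ℚ_[p]) (i j : Fin d) :
    (((diagGL p f)⁻¹ * u * diagGL p f : GL (Fin d) ℚ_[p]) : Matrix (Fin d) (Fin d) ℚ_[p]) i j
      = (p : ℚ_[p]) ^ (-f i) * (u : Matrix (Fin d) (Fin d) ℚ_[p]) i j * (p : ℚ_[p]) ^ (f j) := by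
  have hsplit : (((diagGL p f)⁻¹ * u * diagGL p f : GL (Fin d) ℚ_[p]) :
      Matrix (Fin d) (Fin d) ℚ_[p])
      = (((diagGL p f)⁻¹ : GL (Fin d) ℚ_[p]) : Matrix (Fin d) (Fin d) ℚ_[p]) *
        (u : Matrix (Fin d) (Fin d) ℚ_[p]) *
        ((diagGL p f : GL (Fin d) ℚ_[p]) : Matrix (Fin d) (Fin d) ℚ_[p]) := rfl
  rw [hsplit, show (((diagGL p f)⁻¹ : GL (Fin d) ℚ_[p]) : Matrix (Fin d) (Fin d) ℚ_[p])
      = Matrix.diagonal fun i => (p : ℚ_[p]) ^ (-f i) from rfl,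
    show ((diagGL p f : GL (Fin d) ℚ_[p]) : Matrix (Fin d) (Fin d) ℚ_[p])
      = Matrix.diagonal fun i => (p : ℚ_[p]) ^ (f i) from rfl,
    Matrix.mul_diagonal, Matrix.diagonal_mul]

theorem exists_perm_ne_zero (p : ℕ) [Fact p.Prime] {d : ℕ} (u : GL (Fin d) ℚ_[p]) :
    ∃ σ : Equiv.Perm (Fin d), ∀ i, (u : Matrix (Fin d) (Fin d) ℚ_[p]) (σ i) i ≠ 0 := by
  by_contra hcon
  push_neg at hcon
  have hdet : (u : Matrix (Fin d) (Fin d) ℚ_[p]).det ≠ 0 := by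
    have := u.isUnit
    rw [Matrix.isUnit_iff_isUnit_det] at this
    exact this.ne_zero
  apply hdet
  rw [Matrix.det_apply]
  apply Finset.sum_eq_zero
  intro σ _
  obtain ⟨i, hi⟩ := hcon σ
  exact smul_eq_zero_of_right _ (Finset.prod_eq_zero (Finset.mem_univ i) hi)

set_option maxHeartbeats 1000000 in
/-- Main auxiliary: for `d ≥ 1`, the sequence converges to an explicit limit `L`
characterizing the parabolic condition. -/
theorem aux_limit (p : ℕ) [hp : Fact p.Prime] {d : ℕ} (hd : 0 < d)
    (lam : Fin d → ℝ) (u : GL (Fin d) ℚ_[p]) :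
    ∃ L : ℝ,
      Tendsto
        (fun n : ℕ => (1 / (n : ℝ)) *
          Real.log (opNormP p (((LamP p lam n)⁻¹ * u * LamP p lam n :
            GL (Fin d) ℚ_[p]) : Matrix (Fin d) (Fin d) ℚ_[p])))
        atTop (nhds L)
      ∧ ((∀ i j : Fin d, lam i < lam j → (u : Matrix (Fin d) (Fin d) ℚ_[p]) i j = 0) ↔ L ≤ 0)
      ∧ ((∀ i j : Fin d, lam i < lam j → (u : Matrix (Fin d) (Fin d) ℚ_[p]) i j = 0) → L = 0) := by
  classical
  haveI : Nonempty (Fin d) := ⟨⟨0, hd⟩⟩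
  have hpne : (p : ℚ_[p]) ≠ 0 := Nat.cast_ne_zero.mpr hp.out.ne_zero
  have hlogp : (0:ℝ) < Real.log p := Real.log_pos (by exact_mod_cast hp.out.one_lt)
  set c : ℕ → Fin d → ℤ := fun n i => ⌊((n:ℝ) * lam i) / Real.log p⌋ with hcdef
  set A : ℕ → Matrix (Fin d) (Fin d) ℚ_[p] := fun n =>
    (((LamP p lam n)⁻¹ * u * LamP p lam n : GL (Fin d) ℚ_[p]) :
      Matrix (Fin d) (Fin d) ℚ_[p]) with hAdef
  have hentry : ∀ n i j, A n i j
      = (p : ℚ_[p]) ^ (c n i) * (u : Matrix (Fin d) (Fin d) ℚ_[p]) i j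
        * (p : ℚ_[p]) ^ (-(c n j)) := by
    intro n i j
    show (((LamP p lam n)⁻¹ * u * LamP p lam n : GL (Fin d) ℚ_[p]) :
      Matrix (Fin d) (Fin d) ℚ_[p]) i j = _
    rw [show LamP p lam n = diagGL p (fun i => -(c n i)) from rfl, diagGL_conj_apply]
    simp only [neg_neg]
  have hnorm : ∀ n i j, ‖A n i j‖
      = (p : ℝ) ^ (-(c n i)) * ‖(u : Matrix (Fin d) (Fin d) ℚ_[p]) i j‖ * (p : ℝ) ^ (c n j) := by
    intro n i j
    rw [hentry n i j, norm_mul, norm_mul, Padic.norm_p_zpow, Padic.norm_p_zpow,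
      neg_neg]
  obtain ⟨σ, hσ⟩ := exists_perm_ne_zero p u
  set S : Finset (Fin d × Fin d) :=
    Finset.univ.filter (fun ij => (u : Matrix (Fin d) (Fin d) ℚ_[p]) ij.1 ij.2 ≠ 0) with hSdef
  have i0 : Fin d := ⟨0, hd⟩
  have hmemS : ∀ ij : Fin d × Fin d, ij ∈ S ↔
      (u : Matrix (Fin d) (Fin d) ℚ_[p]) ij.1 ij.2 ≠ 0 := by
    intro ij; simp [hSdef]
  have hS : S.Nonempty := ⟨(σ i0, i0), (hmemS _).mpr (hσ i0)⟩
  have hApos : ∀ n, ∀ ij ∈ S, 0 < ‖A n ij.1 ij.2‖ := by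
    intro n ij hij
    rw [norm_pos_iff, hentry n ij.1 ij.2]
    exact mul_ne_zero (mul_ne_zero (zpow_ne_zero _ hpne) ((hmemS ij).mp hij))
      (zpow_ne_zero _ hpne)
  obtain ⟨s0, hs0⟩ := id hS
  have hsup : ∀ n, opNormP p (A n) = S.sup' hS (fun ij => ‖A n ij.1 ij.2‖) := by
    intro n
    rw [opNormP_eq]
    set F : Fin d × Fin d → ℝ := fun ij => ‖A n ij.1 ij.2‖ with hF
    refine le_antisymm (Finset.sup'_le _ _ ?_) (Finset.sup'_le _ _ ?_)
    · intro ij _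
      by_cases h : (u : Matrix (Fin d) (Fin d) ℚ_[p]) ij.1 ij.2 = 0
      · have hz : F ij = 0 := by
          rw [hF]
          simp only
          rw [hnorm n ij.1 ij.2, h, norm_zero, mul_zero, zero_mul]
        rw [hz]
        exact (hApos n _ hs0).le.trans (Finset.le_sup' F hs0)
      · exact Finset.le_sup' F ((hmemS ij).mpr h)
    · intro ij _
      exact Finset.le_sup' F (Finset.mem_univ ij)
  have hflog : ∀ n : ℕ, (1 / (n:ℝ)) * Real.log (opNormP p (A n))
      = S.sup' hS (fun ij => (1 / (n:ℝ)) * Real.log ‖A n ij.1 ij.2‖) := by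
    intro n
    rw [hsup n, log_sup'_aux S hS _ (hApos n), mul_sup'_aux S hS _ _ (by positivity)]
  have hterm : ∀ ij ∈ S, Tendsto (fun n : ℕ => (1 / (n:ℝ)) * Real.log ‖A n ij.1 ij.2‖)
      atTop (nhds (lam ij.2 - lam ij.1)) := by
    rintro ⟨i, j⟩ hij
    have huij : ‖(u : Matrix (Fin d) (Fin d) ℚ_[p]) i j‖ ≠ 0 :=
      norm_ne_zero_iff.mpr ((hmemS _).mp hij)
    have hppos : (0:ℝ) < (p:ℝ) := by exact_mod_cast hp.out.pos
    have key : ∀ n : ℕ, (1 / (n:ℝ)) * Real.log ‖A n i j‖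
        = (1 / (n:ℝ)) * Real.log ‖(u : Matrix (Fin d) (Fin d) ℚ_[p]) i j‖
          + ((c n j : ℝ) / n) * Real.log p - ((c n i : ℝ) / n) * Real.log p := by
      intro n
      rw [hnorm n i j, Real.log_mul (mul_ne_zero (zpow_ne_zero _ hppos.ne') huij)
        (zpow_ne_zero _ hppos.ne'), Real.log_mul (zpow_ne_zero _ hppos.ne') huij,
        Real.log_zpow, Real.log_zpow]
      push_cast
      ring
    have Tgen : ∀ k : Fin d, Tendsto (fun n : ℕ => ((c n k : ℝ) / n) * Real.log p)
        atTop (nhds (lam k)) := by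
      intro k
      have h1 : Tendsto (fun n : ℕ => (⌊(n:ℝ) * (lam k / Real.log p)⌋ : ℝ) / n)
          atTop (nhds (lam k / Real.log p)) := tendsto_floor_mul_div_aux _
      have h2 : (fun n : ℕ => ((c n k : ℝ) / n) * Real.log p)
          = fun n : ℕ => ((⌊(n:ℝ) * (lam k / Real.log p)⌋ : ℝ) / n) * Real.log p := by
        funext n
        rw [show c n k = ⌊(n:ℝ) * (lam k / Real.log p)⌋ by
          rw [hcdef]; simp [mul_div_assoc]]
      rw [h2]
      have h3 := h1.mul_const (Real.log p)
      rwa [div_mul_cancel₀ _ hlogp.ne'] at h3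
    have T1 : Tendsto (fun n : ℕ => (1 / (n:ℝ)) *
        Real.log ‖(u : Matrix (Fin d) (Fin d) ℚ_[p]) i j‖) atTop (nhds 0) := by
      simpa using tendsto_one_div_atTop_nhds_zero_nat.mul_const
        (Real.log ‖(u : Matrix (Fin d) (Fin d) ℚ_[p]) i j‖)
    have := (T1.add (Tgen j)).sub (Tgen i)
    rw [zero_add] at this
    exact Tendsto.congr (fun n => (key n).symm) this
  refine ⟨S.sup' hS (fun ij => lam ij.2 - lam ij.1), ?_, ?_, ?_⟩
  · exact Tendsto.congr (fun n => (hflog n).symm)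
      (tendsto_finset_sup'_aux S hS _ _ hterm)
  · constructor
    · intro hP
      apply Finset.sup'_le
      intro ij hij
      have := (hmemS ij).mp hij
      by_contra hlt
      push_neg at hlt
      exact this (hP ij.1 ij.2 (by linarith))
    · intro hL i j hij
      by_contra h
      have : lam j - lam i ≤ S.sup' hS (fun ij => lam ij.2 - lam ij.1) :=
        Finset.le_sup' (fun ij => lam ij.2 - lam ij.1) ((hmemS (i,j)).mpr h)
      linarith
  · intro hP
    have hle : S.sup' hS (fun ij => lam ij.2 - lam ij.1) ≤ 0 := by
      apply Finset.sup'_le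
      intro ij hij
      have := (hmemS ij).mp hij
      by_contra hlt
      push_neg at hlt
      exact this (hP ij.1 ij.2 (by linarith))
    have hlamσ : ∀ i, lam i ≤ lam (σ i) := by
      intro i
      by_contra hlt
      push_neg at hlt
      exact hσ i (hP (σ i) i hlt)
    have hsum : ∑ i, (lam (σ i) - lam i) = 0 := by
      rw [Finset.sum_sub_distrib, Equiv.sum_comp σ lam, sub_self]
    have hall : ∀ i ∈ Finset.univ, lam (σ i) - lam i = 0 :=
      (Finset.sum_eq_zero_iff_of_nonneg (fun i _ => by linarith [hlamσ i])).mp hsum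
    have hge : (0:ℝ) ≤ S.sup' hS (fun ij => lam ij.2 - lam ij.1) := by
      have h0 : lam i0 - lam (σ i0) = 0 := by
        have := hall i0 (Finset.mem_univ i0); linarith
      calc (0:ℝ) = lam i0 - lam (σ i0) := h0.symm
        _ ≤ _ := Finset.le_sup' (fun ij => lam ij.2 - lam ij.1) ((hmemS (σ i0, i0)).mpr (hσ i0))
    linarith

open Filter in
/-- For `λ_1 ≥ ... ≥ λ_d` and `Λ_n = diag(p^{-⌊nλ_i/ln p⌋})`, a matrix `u ∈ GL_d(ℚ_p)`
lies in the parabolic subgroup `P_p = {u : u_{ij} = 0 whenever λ_i < λ_j}` iff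
`(1/n)·ln‖Λ_n⁻¹ u Λ_n‖_p → 0`, iff `limsup (1/n)·ln‖Λ_n⁻¹ u Λ_n‖_p ≤ 0`. -/
theorem mem_parabolic_iff_tendsto (p : ℕ) [Fact p.Prime] (d : ℕ)
    (lam : Fin d → ℝ) (hlam : Antitone lam) (u : GL (Fin d) ℚ_[p]) :
    ((∀ i j : Fin d, lam i < lam j → (u : Matrix (Fin d) (Fin d) ℚ_[p]) i j = 0) ↔
      Tendsto
        (fun n : ℕ => (1 / (n : ℝ)) *
          Real.log (opNormP p (((LamP p lam n)⁻¹ * u * LamP p lam n :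
            GL (Fin d) ℚ_[p]) : Matrix (Fin d) (Fin d) ℚ_[p])))
        atTop (nhds 0))
    ∧
    ((∀ i j : Fin d, lam i < lam j → (u : Matrix (Fin d) (Fin d) ℚ_[p]) i j = 0) ↔
      Filter.limsup
        (fun n : ℕ => (1 / (n : ℝ)) *
          Real.log (opNormP p (((LamP p lam n)⁻¹ * u * LamP p lam n :
            GL (Fin d) ℚ_[p]) : Matrix (Fin d) (Fin d) ℚ_[p])))
        atTop ≤ 0) := by
  rcases Nat.eq_zero_or_pos d with hd | hd
  · subst hd
    have hzero : ∀ g : Matrix (Fin 0) (Fin 0) ℚ_[p], opNormP p g = 0 := by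
      intro g
      apply le_antisymm _ (norm_nonneg _)
      apply ContinuousLinearMap.opNorm_le_bound _ le_rfl
      intro v
      have hv : (LinearMap.toContinuousLinearMap g.mulVecLin) v = 0 := by
        funext i
        exact i.elim0
      rw [hv, norm_zero]
      positivity
    have hfun : (fun n : ℕ => (1 / (n : ℝ)) *
        Real.log (opNormP p (((LamP p lam n)⁻¹ * u * LamP p lam n :
          GL (Fin 0) ℚ_[p]) : Matrix (Fin 0) (Fin 0) ℚ_[p]))) = fun _ => (0:ℝ) := by
      funext n
      rw [hzero, Real.log_zero, mul_zero]
    rw [hfun]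
    have htriv : ∀ i j : Fin 0, lam i < lam j →
        (u : Matrix (Fin 0) (Fin 0) ℚ_[p]) i j = 0 := fun i => i.elim0
    constructor
    · exact ⟨fun _ => tendsto_const_nhds, fun _ => htriv⟩
    · refine ⟨fun _ => ?_, fun _ => htriv⟩
      rw [Filter.limsup_const (0:ℝ)]
  · obtain ⟨L, hT, hiff, heq⟩ := aux_limit p hd lam u
    constructor
    · constructor
      · intro hP
        rw [← heq hP]
        exact hT
      · intro h0
        exact hiff.mpr ((tendsto_nhds_unique hT h0).le)
    · rw [hT.limsup_eq]
      exact hiff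
end

section
/- Let λ_1 ≥ ... ≥ λ_d be real numbers, Λ_n the diagonal matrix with (Λ_n)_{ii} = e^{nλ_i} (real case). Then a matrix u ∈ GL_d(ℝ) satisfies u_{ij} = 0 whenever λ_i < λ_j if and only if lim_{n→∞} (1/n)·ln‖Λ_n⁻¹ u Λ_n‖ = 0. -/
open Matrix

/-- `Λ_n`: the invertible real diagonal matrix with entries `e^{nλ_i}`. -/
noncomputable def LamR {d : ℕ} (lam : Fin d → ℝ) (n : ℕ) : GL (Fin d) ℝ :=
  ⟨Matrix.diagonal fun i => Real.exp (n * lam i),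
   Matrix.diagonal fun i => Real.exp (-(n * lam i)),
   by rw [Matrix.diagonal_mul_diagonal]; simp [← Real.exp_add],
   by rw [Matrix.diagonal_mul_diagonal]; simp [← Real.exp_add]⟩

private lemma coord_le_norm {d : ℕ} (y : EuclideanSpace ℝ (Fin d)) (i : Fin d) :
    |y i| ≤ ‖y‖ := by
  rw [EuclideanSpace.norm_eq]
  calc |y i| = Real.sqrt (‖y i‖ ^ 2) := by
        rw [Real.sqrt_sq (norm_nonneg _), Real.norm_eq_abs]
    _ ≤ Real.sqrt (∑ j, ‖y j‖ ^ 2) :=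
        Real.sqrt_le_sqrt (Finset.single_le_sum (f := fun j => ‖y j‖ ^ 2)
          (fun j _ => sq_nonneg _) (Finset.mem_univ i))

private lemma norm_le_sum_abs {d : ℕ} (y : EuclideanSpace ℝ (Fin d)) :
    ‖y‖ ≤ ∑ i, |y i| := by
  have hy : y = ∑ i, EuclideanSpace.single i (y i) := by
    ext j
    rw [WithLp.ofLp_sum, Finset.sum_apply]
    simp [EuclideanSpace.single_apply]
  calc ‖y‖ = ‖∑ i, EuclideanSpace.single i (y i)‖ := by rw [← hy]
    _ ≤ ∑ i, ‖EuclideanSpace.single i (y i)‖ := norm_sum_le _ _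
    _ = ∑ i, |y i| := by simp [Real.norm_eq_abs]

private lemma abs_le_opNormR {d : ℕ} (g : Matrix (Fin d) (Fin d) ℝ) (i j : Fin d) :
    |g i j| ≤ opNormR g := by
  have h := (LinearMap.toContinuousLinearMap (Matrix.toEuclideanLin g)).le_opNorm
      (EuclideanSpace.single j (1 : ℝ))
  rw [EuclideanSpace.norm_single, norm_one, mul_one] at h
  refine le_trans (le_trans ?_ (coord_le_norm _ i)) h
  have hv : (LinearMap.toContinuousLinearMap (Matrix.toEuclideanLin g))
      (EuclideanSpace.single j (1 : ℝ)) i = g i j := by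
    simp [Matrix.toEuclideanLin_apply, Matrix.mulVec_single]
  rw [hv]

private lemma opNormR_le_sum {d : ℕ} (g : Matrix (Fin d) (Fin d) ℝ) :
    opNormR g ≤ ∑ i, ∑ j, |g i j| := by
  refine ContinuousLinearMap.opNorm_le_bound _ (by positivity) fun x => ?_
  calc ‖(LinearMap.toContinuousLinearMap (Matrix.toEuclideanLin g)) x‖
      ≤ ∑ i, |(LinearMap.toContinuousLinearMap (Matrix.toEuclideanLin g)) x i| :=
        norm_le_sum_abs _
    _ ≤ ∑ i, ∑ j, |g i j| * ‖x‖ := by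
        refine Finset.sum_le_sum fun i _ => ?_
        have hv : (LinearMap.toContinuousLinearMap (Matrix.toEuclideanLin g)) x i
            = ∑ j, g i j * x j := by
          simp [Matrix.toEuclideanLin_apply, Matrix.mulVec, dotProduct]
        rw [hv]
        calc |∑ j, g i j * x j| ≤ ∑ j, |g i j * x j| := Finset.abs_sum_le_sum_abs _ _
          _ ≤ ∑ j, |g i j| * ‖x‖ := Finset.sum_le_sum fun j _ => by
              rw [abs_mul]
              exact mul_le_mul_of_nonneg_left (coord_le_norm x j) (abs_nonneg _)
    _ = (∑ i, ∑ j, |g i j|) * ‖x‖ := by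
        rw [Finset.sum_mul]
        exact Finset.sum_congr rfl fun i _ => (Finset.sum_mul _ _ _).symm

private lemma conj_entry {d : ℕ} (lam : Fin d → ℝ) (u : GL (Fin d) ℝ) (n : ℕ) (i j : Fin d) :
    (((LamR lam n)⁻¹ * u * LamR lam n : GL (Fin d) ℝ) : Matrix (Fin d) (Fin d) ℝ) i j
      = (u : Matrix (Fin d) (Fin d) ℝ) i j * Real.exp (n * (lam j - lam i)) := by
  have h : (((LamR lam n)⁻¹ * u * LamR lam n : GL (Fin d) ℝ) : Matrix (Fin d) (Fin d) ℝ)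
      = Matrix.diagonal (fun i => Real.exp (-(n * lam i)))
        * (u : Matrix (Fin d) (Fin d) ℝ)
        * Matrix.diagonal (fun i => Real.exp (n * lam i)) := rfl
  rw [h, Matrix.mul_diagonal, Matrix.diagonal_mul,
    show (n : ℝ) * (lam j - lam i) = n * lam j + -(n * lam i) by ring, Real.exp_add]
  ring

open Filter in
/-- For `λ_1 ≥ ... ≥ λ_d` and `Λ_n = diag(e^{nλ_i})`, a matrix `u ∈ GL_d(ℝ)` satisfies
`u_{ij} = 0` whenever `λ_i < λ_j` iff `(1/n)·ln‖Λ_n⁻¹ u Λ_n‖ → 0`. -/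
theorem mem_parabolic_iff_tendsto_real (d : ℕ)
    (lam : Fin d → ℝ) (hlam : Antitone lam) (u : GL (Fin d) ℝ) :
    (∀ i j : Fin d, lam i < lam j → (u : Matrix (Fin d) (Fin d) ℝ) i j = 0) ↔
      Tendsto
        (fun n : ℕ => (1 / (n : ℝ)) *
          Real.log (opNormR (((LamR lam n)⁻¹ * u * LamR lam n :
            GL (Fin d) ℝ) : Matrix (Fin d) (Fin d) ℝ)))
        atTop (nhds 0) := by
  rcases Nat.eq_zero_or_pos d with hd | hd
  · subst hd
    have hz : ∀ g : Matrix (Fin 0) (Fin 0) ℝ, opNormR g = 0 := fun g =>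
      le_antisymm (by simpa using opNormR_le_sum g) (norm_nonneg _)
    constructor
    · intro _
      simp only [hz, Real.log_zero, mul_zero]
      exact tendsto_const_nhds
    · exact fun _ i => i.elim0
  haveI : Nonempty (Fin d) := ⟨⟨0, hd⟩⟩
  constructor
  · intro hP
    obtain ⟨i₀, j₀, hne, hle⟩ :
        ∃ i j, (u : Matrix (Fin d) (Fin d) ℝ) i j ≠ 0 ∧ lam i ≤ lam j := by
      by_contra hcon
      push_neg at hcon
      have hdet : (u : Matrix (Fin d) (Fin d) ℝ).det = 0 := by
        rw [Matrix.det_apply]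
        refine Finset.sum_eq_zero fun σ _ => ?_
        have hex : ∃ i, (u : Matrix (Fin d) (Fin d) ℝ) (σ i) i = 0 := by
          by_contra hzz
          push_neg at hzz
          have h1 : ∑ i, lam i < ∑ i, lam (σ i) :=
            Finset.sum_lt_sum_of_nonempty Finset.univ_nonempty
              (fun i _ => hcon (σ i) i (hzz i))
          rw [Equiv.sum_comp σ lam] at h1
          exact lt_irrefl _ h1
        obtain ⟨i, hi⟩ := hex
        have hp : ∏ k, (u : Matrix (Fin d) (Fin d) ℝ) (σ k) k = 0 :=
          Finset.prod_eq_zero (f := fun k => (u : Matrix (Fin d) (Fin d) ℝ) (σ k) k)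
            (Finset.mem_univ i) hi
        rw [hp, smul_zero]
      exact (((Matrix.isUnit_iff_isUnit_det _).mp u.isUnit).ne_zero) hdet
    set c : ℝ := |(u : Matrix (Fin d) (Fin d) ℝ) i₀ j₀| with hc_def
    set C : ℝ := ∑ i, ∑ j, |(u : Matrix (Fin d) (Fin d) ℝ) i j| with hC_def
    have hc : 0 < c := abs_pos.mpr hne
    have hlow : ∀ n : ℕ, c ≤ opNormR (((LamR lam n)⁻¹ * u * LamR lam n :
        GL (Fin d) ℝ) : Matrix (Fin d) (Fin d) ℝ) := by
      intro n
      have h2 := abs_le_opNormR (((LamR lam n)⁻¹ * u * LamR lam n :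
        GL (Fin d) ℝ) : Matrix (Fin d) (Fin d) ℝ) i₀ j₀
      rw [conj_entry, abs_mul, Real.abs_exp] at h2
      refine le_trans ?_ h2
      have h1 : (1 : ℝ) ≤ Real.exp ((n : ℝ) * (lam j₀ - lam i₀)) :=
        Real.one_le_exp (mul_nonneg (Nat.cast_nonneg n) (sub_nonneg.mpr hle))
      calc c = c * 1 := (mul_one c).symm
        _ ≤ c * Real.exp ((n : ℝ) * (lam j₀ - lam i₀)) :=
            mul_le_mul_of_nonneg_left h1 (abs_nonneg _)
    have hup : ∀ n : ℕ, opNormR (((LamR lam n)⁻¹ * u * LamR lam n :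
        GL (Fin d) ℝ) : Matrix (Fin d) (Fin d) ℝ) ≤ C := by
      intro n
      refine le_trans (opNormR_le_sum _) ?_
      refine Finset.sum_le_sum fun i _ => Finset.sum_le_sum fun j _ => ?_
      rw [conj_entry, abs_mul, Real.abs_exp]
      rcases eq_or_ne ((u : Matrix (Fin d) (Fin d) ℝ) i j) 0 with h0 | h0
      · simp [h0]
      · have hji : lam j ≤ lam i := by
          by_contra hlt
          exact h0 (hP i j (lt_of_not_ge hlt))
        have hexp : Real.exp ((n : ℝ) * (lam j - lam i)) ≤ 1 := by
          calc Real.exp ((n : ℝ) * (lam j - lam i)) ≤ Real.exp 0 :=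
                Real.exp_le_exp.mpr
                  (mul_nonpos_of_nonneg_of_nonpos (Nat.cast_nonneg n)
                    (sub_nonpos.mpr hji))
            _ = 1 := Real.exp_zero
        calc |(u : Matrix (Fin d) (Fin d) ℝ) i j| * Real.exp ((n : ℝ) * (lam j - lam i))
            ≤ |(u : Matrix (Fin d) (Fin d) ℝ) i j| * 1 :=
              mul_le_mul_of_nonneg_left hexp (abs_nonneg _)
          _ = _ := mul_one _
    have hcpos : ∀ n : ℕ, 0 < opNormR (((LamR lam n)⁻¹ * u * LamR lam n :
        GL (Fin d) ℝ) : Matrix (Fin d) (Fin d) ℝ) := fun n => lt_of_lt_of_le hc (hlow n)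
    have h3 : Tendsto (fun n : ℕ => (1 / (n : ℝ)) * Real.log c) atTop (nhds 0) := by
      simpa [div_eq_inv_mul, one_div] using
        tendsto_const_div_atTop_nhds_zero_nat (Real.log c)
    have h4 : Tendsto (fun n : ℕ => (1 / (n : ℝ)) * Real.log C) atTop (nhds 0) := by
      simpa [div_eq_inv_mul, one_div] using
        tendsto_const_div_atTop_nhds_zero_nat (Real.log C)
    refine tendsto_of_tendsto_of_tendsto_of_le_of_le h3 h4 (fun n => ?_) (fun n => ?_)
    · exact mul_le_mul_of_nonneg_left (Real.log_le_log hc (hlow n))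
        (by positivity : (0 : ℝ) ≤ 1 / n)
    · exact mul_le_mul_of_nonneg_left (Real.log_le_log (hcpos n) (hup n))
        (by positivity : (0 : ℝ) ≤ 1 / n)
  · intro hT i j hij
    by_contra hne
    have hδpos : 0 < lam j - lam i := sub_pos.mpr hij
    have habs : 0 < |(u : Matrix (Fin d) (Fin d) ℝ) i j| := abs_pos.mpr hne
    have key : Tendsto (fun n : ℕ =>
        (1 / (n : ℝ)) * Real.log |(u : Matrix (Fin d) (Fin d) ℝ) i j| + (lam j - lam i))
        atTop (nhds (lam j - lam i)) := by
      have := ((tendsto_const_div_atTop_nhds_zero_nat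
        (Real.log |(u : Matrix (Fin d) (Fin d) ℝ) i j|)).add
        (tendsto_const_nhds (x := lam j - lam i) (f := atTop)))
      simpa [div_eq_inv_mul, one_div] using this
    have hle : (fun n : ℕ =>
        (1 / (n : ℝ)) * Real.log |(u : Matrix (Fin d) (Fin d) ℝ) i j| + (lam j - lam i))
        ≤ᶠ[atTop] (fun n : ℕ => (1 / (n : ℝ)) *
          Real.log (opNormR (((LamR lam n)⁻¹ * u * LamR lam n :
            GL (Fin d) ℝ) : Matrix (Fin d) (Fin d) ℝ))) := by
      filter_upwards [eventually_ge_atTop 1] with n hn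
      have hn0 : (n : ℝ) ≠ 0 := Nat.cast_ne_zero.mpr (by omega)
      have hlo := abs_le_opNormR (((LamR lam n)⁻¹ * u * LamR lam n :
        GL (Fin d) ℝ) : Matrix (Fin d) (Fin d) ℝ) i j
      rw [conj_entry, abs_mul, Real.abs_exp] at hlo
      have h1 := Real.log_le_log (mul_pos habs (Real.exp_pos _)) hlo
      rw [Real.log_mul (ne_of_gt habs) (Real.exp_ne_zero _), Real.log_exp] at h1
      have h2 := mul_le_mul_of_nonneg_left h1 (by positivity : (0 : ℝ) ≤ 1 / n)
      calc (1 / (n : ℝ)) * Real.log |(u : Matrix (Fin d) (Fin d) ℝ) i j| + (lam j - lam i)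
          = (1 / (n : ℝ)) * (Real.log |(u : Matrix (Fin d) (Fin d) ℝ) i j|
            + (n : ℝ) * (lam j - lam i)) := by
            field_simp
            try ring
        _ ≤ _ := h2
    have hfinal : lam j - lam i ≤ 0 := le_of_tendsto_of_tendsto key hT hle
    exact absurd hfinal (not_le.mpr hδpos)
end
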